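/- Let k ≥ 1 and n ≥ 2 be integers and let L be a k×k integer matrix with all row sums and column sums zero, and suppose the block matrix L̃ₙ = [[nIₖ + L, −J], [−J, (n+k)Iₙ₋₁ − J]] has nonzero determinant. Let C = ℤ^{k+n−1}/L̃ₙ(ℤ^{k+n−1}) and let p_L(x) = det(xIₖ − L). Then C has a subgroup S isomorphic to (ℤ/(n+k)ℤ)^{n−1} such that the quotient C/S is a finite group of order |p_L(−n)|/n; equivalently, there is a short exact sequence 0 → (ℤ/(n+k)ℤ)^{n−1} → C → Hₙ → 0 with |Hₙ| = |p_L(−n)|/n. -/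

import Mathlib

open Matrix


theorem mulVec_inj_of_det_ne_zero {k : ℕ} {A : Matrix (Fin k) (Fin k) ℤ} (hA : A.det ≠ 0)
    {v : Fin k → ℤ} (hv : A *ᵥ v = 0) : v = 0 := by
  by_contra h
  exact hA (Matrix.exists_mulVec_eq_zero_iff.mp ⟨v, h, hv⟩)

theorem card_coker_eq_natAbs_det {k : ℕ} (A : Matrix (Fin k) (Fin k) ℤ) (hA : A.det ≠ 0) :
    Nat.card ((Fin k → ℤ) ⧸ LinearMap.range A.mulVecLin) = A.det.natAbs := by
  classical
  set N : Submodule ℤ (Fin k → ℤ) := LinearMap.range A.mulVecLin with hN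
  have hinj : Function.Injective A.mulVecLin := by
    rw [← LinearMap.ker_eq_bot, Matrix.ker_mulVecLin_eq_bot_iff]
    exact fun v hv => mulVec_inj_of_det_ne_zero hA hv
  -- N is isomorphic to ℤ^k
  let eN : (Fin k → ℤ) ≃ₗ[ℤ] N := LinearEquiv.ofInjective A.mulVecLin hinj
  obtain ⟨nn, snf⟩ := N.smithNormalForm (Pi.basisFun ℤ (Fin k))
  obtain ⟨bM, bN, f, a, hsnf⟩ := snf
  have hnn : nn = k := by
    have h1 : Module.finrank ℤ N = nn := Module.finrank_eq_card_basis bN |>.trans (by simp)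
    have h2 : Module.finrank ℤ N = k := by
      rw [LinearEquiv.finrank_eq eN.symm]
      simp [Module.finrank_fintype_fun_eq_card]
    rw [← h1, h2]
  subst hnn
  have hfbij : Function.Bijective f :=
    (Fintype.bijective_iff_injective_and_card f).mpr ⟨f.injective, by simp⟩
  let ef : Fin nn ≃ Fin nn := Equiv.ofBijective f hfbij
  -- index computation
  have hidx : N.toAddSubgroup.index = ∏ i, (a i).natAbs := by
    have := Module.Basis.SmithNormalForm.toAddSubgroup_index_eq_pow_mul_prod
      (⟨bM, bN, f, a, hsnf⟩ : Module.Basis.SmithNormalForm N (Fin nn) nn)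
    simpa using this
  have hcard : Nat.card ((Fin nn → ℤ) ⧸ N) = N.toAddSubgroup.index := rfl
  -- determinant computation
  let bN' : Module.Basis (Fin nn) ℤ N := bN.reindex ef
  let e' : (Fin nn → ℤ) ≃ₗ[ℤ] N := bM.equiv bN' (Equiv.refl _)
  have he' : ∀ j, (N.subtype ∘ₗ (e' : (Fin nn → ℤ) →ₗ[ℤ] N)) (bM j)
      = a (ef.symm j) • bM j := by
    intro j
    have h1 : e' (bM j) = bN' j := by simp [e', Module.Basis.equiv_apply]
    have h2 : (bN' j : Fin nn → ℤ) = a (ef.symm j) • bM (f (ef.symm j)) := by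
      simp [bN', Module.Basis.reindex_apply, hsnf]
    have h3 : f (ef.symm j) = j := ef.apply_symm_apply j
    simp only [LinearMap.comp_apply, LinearEquiv.coe_coe, Submodule.subtype_apply, h1]
    rw [h2, h3]
  have hdet' : (LinearMap.det (N.subtype ∘ₗ (e' : (Fin nn → ℤ) →ₗ[ℤ] N))).natAbs
      = ∏ i, (a i).natAbs := by
    rw [← LinearMap.det_toMatrix bM]
    have : LinearMap.toMatrix bM bM (N.subtype ∘ₗ (e' : (Fin nn → ℤ) →ₗ[ℤ] N))
        = Matrix.diagonal (fun j => a (ef.symm j)) := by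
      ext i j
      rw [LinearMap.toMatrix_apply, he' j, _root_.map_smul, Module.Basis.repr_self]
      by_cases h : i = j
      · subst h; simp
      · simp [Finsupp.single_eq_of_ne' (Ne.symm h), Matrix.diagonal_apply_ne _ h]
    rw [this, Matrix.det_diagonal,
      show (∏ j, a (ef.symm j)) = ∏ i, a i from Equiv.prod_comp ef.symm a]
    exact map_prod Int.natAbsHom a Finset.univ
  have hAdet : A.det = LinearMap.det (A.mulVecLin) := by
    rw [← Matrix.toLin'_apply']
    exact (LinearMap.det_toLin' A).symm
  have hcomp : A.mulVecLin = N.subtype ∘ₗ (eN : (Fin nn → ℤ) →ₗ[ℤ] N) := by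
    refine LinearMap.ext fun v => ?_
    simp only [LinearMap.comp_apply, LinearEquiv.coe_coe, Submodule.subtype_apply]
    exact (LinearEquiv.ofInjective_apply A.mulVecLin v).symm
  have hassoc : Associated (LinearMap.det (N.subtype ∘ₗ (eN : (Fin nn → ℤ) →ₗ[ℤ] N)))
      (LinearMap.det (N.subtype ∘ₗ (e' : (Fin nn → ℤ) →ₗ[ℤ] N))) :=
    LinearMap.associated_det_comp_equiv _ _ _
  have : A.det.natAbs = ∏ i, (a i).natAbs := by
    rw [hAdet, hcomp, Int.natAbs_eq_iff_associated.mpr hassoc, hdet']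
  rw [hcard, hidx, this]


variable {k m n : ℕ}

lemma mulVec_inl (L : Matrix (Fin k) (Fin k) ℤ) (x : Fin k ⊕ Fin m → ℤ) (i : Fin k) :
    (Matrix.fromBlocks
      ((n : ℤ) • 1 + L) (-(Matrix.of fun _ _ => 1) : Matrix (Fin k) (Fin m) ℤ)
      (-(Matrix.of fun _ _ => 1) : Matrix (Fin m) (Fin k) ℤ) (((n + k : ℕ) : ℤ) • (1 : Matrix (Fin m) (Fin m) ℤ) - Matrix.of fun _ _ => 1)).mulVec x
      (Sum.inl i)
    = n * x (Sum.inl i) + (∑ j, L i j * x (Sum.inl j)) - ∑ c, x (Sum.inr c) := by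
  simp only [Matrix.mulVec, dotProduct, Fintype.sum_sum_type,
    Matrix.fromBlocks_apply₁₁, Matrix.fromBlocks_apply₁₂, Matrix.add_apply, Matrix.smul_apply,
    Matrix.one_apply, Matrix.neg_apply, Matrix.of_apply, smul_eq_mul, mul_ite, mul_one, mul_zero,
    add_mul, ite_mul, zero_mul, neg_mul, one_mul, Finset.sum_add_distrib, Finset.sum_ite_eq,
    Finset.mem_univ, if_true, Finset.sum_neg_distrib]
  ring

lemma mulVec_inr (L : Matrix (Fin k) (Fin k) ℤ) (x : Fin k ⊕ Fin m → ℤ) (c : Fin m) :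
    (Matrix.fromBlocks
      ((n : ℤ) • 1 + L) (-(Matrix.of fun _ _ => 1) : Matrix (Fin k) (Fin m) ℤ)
      (-(Matrix.of fun _ _ => 1) : Matrix (Fin m) (Fin k) ℤ) (((n + k : ℕ) : ℤ) • (1 : Matrix (Fin m) (Fin m) ℤ) - Matrix.of fun _ _ => 1)).mulVec x
      (Sum.inr c)
    = -(∑ j, x (Sum.inl j)) + ((n : ℤ) + k) * x (Sum.inr c) - ∑ c', x (Sum.inr c') := by
  simp only [Matrix.mulVec, dotProduct, Fintype.sum_sum_type,
    Matrix.fromBlocks_apply₂₁, Matrix.fromBlocks_apply₂₂, Matrix.sub_apply, Matrix.smul_apply,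
    Matrix.one_apply, Matrix.neg_apply, Matrix.of_apply, smul_eq_mul, mul_ite, mul_one, mul_zero,
    sub_mul, ite_mul, zero_mul, neg_mul, one_mul, Finset.sum_sub_distrib, Finset.sum_ite_eq,
    Finset.mem_univ, if_true, Finset.sum_neg_distrib, Nat.cast_add]
  ring

lemma A_mulVec (L : Matrix (Fin k) (Fin k) ℤ) (u : Fin k → ℤ) (i : Fin k) :
    (((n : ℤ) • 1 + L).mulVec u) i = n * u i + ∑ j, L i j * u j := by
  simp only [Matrix.mulVec, dotProduct, Matrix.add_apply, Matrix.smul_apply,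
    Matrix.one_apply, smul_eq_mul, mul_ite, mul_one, mul_zero, add_mul, ite_mul, zero_mul,
    Finset.sum_add_distrib, Finset.sum_ite_eq, Finset.mem_univ, if_true]

/-- Theorem A of Brown. The cokernel `C` of the reduced Laplacian `L̃ₙ`
has a subgroup `S ≅ (ℤ/(n+k)ℤ)^{n-1}` whose quotient `C/S` is a finite group `Hₙ` of order
`|p_L(-n)|/n`; i.e. there is a short exact sequence
`0 → (ℤ/(n+k)ℤ)^{n-1} → C → Hₙ → 0`. -/
theorem cone_critical_group_ses
    (k n : ℕ) (hk : 1 ≤ k) (hn : 2 ≤ n)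
    (L : Matrix (Fin k) (Fin k) ℤ)
    (hrow : ∀ i, ∑ j, L i j = 0) (hcol : ∀ j, ∑ i, L i j = 0)
    (Ln : Matrix (Fin k ⊕ Fin (n - 1)) (Fin k ⊕ Fin (n - 1)) ℤ)
    (hLn : Ln = Matrix.fromBlocks
      ((n : ℤ) • 1 + L) (-(Matrix.of fun _ _ => 1))
      (-(Matrix.of fun _ _ => 1)) (((n + k : ℕ) : ℤ) • 1 - Matrix.of fun _ _ => 1))
    (hdet : Ln.det ≠ 0) :
    ∃ S : AddSubgroup ((Fin k ⊕ Fin (n - 1) → ℤ) ⧸ LinearMap.range Ln.mulVecLin),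
      Nonempty (S ≃+ (Fin (n - 1) → ZMod (n + k))) ∧
      Finite (((Fin k ⊕ Fin (n - 1) → ℤ) ⧸ LinearMap.range Ln.mulVecLin) ⧸ S) ∧
      (n : ℤ) *
        (Nat.card (((Fin k ⊕ Fin (n - 1) → ℤ) ⧸ LinearMap.range Ln.mulVecLin) ⧸ S) : ℤ)
        = |((-(n : ℤ)) • 1 - L).det| := by
  classical
  subst hLn
  have hn0 : (n : ℤ) ≠ 0 := by positivity
  have hmk : ((n - 1 : ℕ) : ℤ) = (n : ℤ) - 1 := by
    have : (1:ℕ) ≤ n := le_trans one_le_two hn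
    omega
  set Ln : Matrix (Fin k ⊕ Fin (n-1)) (Fin k ⊕ Fin (n-1)) ℤ := Matrix.fromBlocks
      ((n : ℤ) • 1 + L) (-(Matrix.of fun _ _ => 1))
      (-(Matrix.of fun _ _ => 1)) (((n + k : ℕ) : ℤ) • 1 - Matrix.of fun _ _ => 1) with hLn
  have hones : Ln.mulVec (fun _ => 1) = (fun _ => 1) := by
    funext p
    rcases p with i | c
    · rw [hLn, mulVec_inl L]
      simp [hrow i, hmk]
    · rw [hLn, mulVec_inr L]
      simp [hmk, Nat.cast_add]
  -- (n+k) • (0 ⊕ v) lies in the range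
  have hF2 : ∀ v : Fin (n-1) → ℤ,
      Ln.mulVec (Sum.elim (0 : Fin k → ℤ) v + (∑ c, v c) • (fun _ => 1))
        = Sum.elim (0 : Fin k → ℤ) (((n + k : ℕ) : ℤ) • v) := by
    intro v
    have := congrFun (Ln.mulVec_add (Sum.elim (0 : Fin k → ℤ) v) ((∑ c, v c) • (fun _ => 1)))
    funext p
    rw [Matrix.mulVec_add, Matrix.mulVec_smul, hones]
    simp only [Pi.add_apply]
    rcases p with i | c
    · rw [hLn, mulVec_inl L]
      simp [Nat.cast_add]
    · rw [hLn, mulVec_inr L]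
      simp [Nat.cast_add]
  -- the key rigidity fact
  have hAkey : ∀ (u : Fin k → ℤ) (c : ℤ), (((n : ℤ) • 1 + L).mulVec u = fun _ => c) →
      (∀ i, u i = u ⟨0, hk⟩) ∧ c = n * u ⟨0, hk⟩ := by
    intro u c huc
    have hsum : (n : ℤ) * (∑ j, u j) = k * c := by
      have h1 : ∑ i, (((n : ℤ) • 1 + L).mulVec u) i = k * c := by
        rw [huc]; simp [mul_comm]
      have h2 : ∀ i, (((n : ℤ) • 1 + L).mulVec u) i = n * u i + ∑ j, L i j * u j :=
        fun i => A_mulVec L u i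
      rw [Finset.sum_congr rfl (fun i _ => h2 i)] at h1
      rw [Finset.sum_add_distrib, ← Finset.mul_sum, Finset.sum_comm] at h1
      have h3 : ∀ j, ∑ i, L i j * u j = 0 := by
        intro j
        rw [← Finset.sum_mul, hcol j, zero_mul]
      rw [Finset.sum_congr rfl (fun j _ => h3 j), Finset.sum_const_zero, add_zero] at h1
      exact h1
    set w : Fin k → ℤ := fun i => n * u i - c with hw
    have hwzero : Ln.mulVec (Sum.elim w 0) = 0 := by
      funext p
      rcases p with i | c'
      · rw [hLn, mulVec_inl L]
        have hAi : (n : ℤ) * u i + ∑ j, L i j * u j = c := by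
          have := congrFun huc i
          rw [← A_mulVec L u i]
          exact this
        simp only [Sum.elim_inl, Sum.elim_inr, Pi.zero_apply, Finset.sum_const_zero, sub_zero, hw]
        have hsplit : ∑ j, L i j * ((n : ℤ) * u j - c) = (n : ℤ) * (∑ j, L i j * u j) - c * (∑ j, L i j) := by
          have hterm : ∀ j, L i j * ((n:ℤ) * u j - c) = n * (L i j * u j) - c * (L i j) :=
            fun j => by ring
          rw [Finset.sum_congr rfl (fun j _ => hterm j), Finset.sum_sub_distrib,
            ← Finset.mul_sum, ← Finset.mul_sum]
        rw [hsplit, hrow i]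
        have : (n:ℤ) * (∑ j, L i j * u j) = n * (c - n * u i) := by
          rw [show (∑ j, L i j * u j) = c - n * u i by linarith [hAi]]
        rw [this]
        ring
      · rw [hLn, mulVec_inr L]
        simp only [Sum.elim_inl, Sum.elim_inr, Pi.zero_apply, Finset.sum_const_zero, hw]
        have : ∑ j, ((n:ℤ) * u j - c) = n * (∑ j, u j) - k * c := by
          rw [Finset.sum_sub_distrib, ← Finset.mul_sum]
          simp [mul_comm]
        rw [this, hsum]
        ring
    have hw0 : w = 0 := by
      by_contra h
      refine hdet (Matrix.exists_mulVec_eq_zero_iff.mp ⟨Sum.elim w 0, fun hc => h ?_, hwzero⟩)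
      funext i
      exact congrFun hc (Sum.inl i)
    have hnu : ∀ i, (n : ℤ) * u i = c := by
      intro i
      have := congrFun hw0 i
      simp [hw] at this
      linarith
    constructor
    · intro i
      have h1 := hnu i
      have h2 := hnu ⟨0, hk⟩
      exact mul_left_cancel₀ hn0 (h1.trans h2.symm)
    · exact (hnu ⟨0, hk⟩).symm
  -- F3: preimages of second-block vectors
  have hF3 : ∀ (x : Fin k ⊕ Fin (n-1) → ℤ) (y : Fin (n-1) → ℤ),
      Ln.mulVec x = Sum.elim (0 : Fin k → ℤ) y → ∀ c, ((n + k : ℕ) : ℤ) ∣ y c := by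
    intro x y hxy c
    have hAeq : ((n : ℤ) • 1 + L).mulVec (fun i => x (Sum.inl i))
        = fun _ => (∑ c', x (Sum.inr c')) := by
      funext i
      rw [A_mulVec]
      have h0 := congrFun hxy (Sum.inl i)
      rw [hLn, mulVec_inl L] at h0
      simp only [Sum.elim_inl, Pi.zero_apply] at h0
      linarith
    obtain ⟨hconst, hc⟩ := hAkey _ _ hAeq
    have h1 := congrFun hxy (Sum.inr c)
    rw [hLn, mulVec_inr L] at h1
    simp only [Sum.elim_inr] at h1
    have hSu : (∑ j, x (Sum.inl j)) = k * x (Sum.inl ⟨0, hk⟩) := by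
      rw [Finset.sum_congr rfl (fun j _ => hconst j)]
      simp [mul_comm]
    have hyc : y c = ((n : ℤ) + k) * (x (Sum.inr c) - x (Sum.inl ⟨0, hk⟩)) := by
      rw [← h1, hSu, hc]
      ring
    exact ⟨x (Sum.inr c) - x (Sum.inl ⟨0, hk⟩), by rw [hyc]; push_cast; ring⟩
  haveI : NeZero (n + k) := ⟨by omega⟩
  -- the subgroup S
  set Rg : Submodule ℤ (Fin k ⊕ Fin (n-1) → ℤ) := LinearMap.range Ln.mulVecLin with hRg
  let ι : (Fin (n-1) → ℤ) →ₗ[ℤ] (Fin k ⊕ Fin (n-1) → ℤ) :=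
    { toFun := fun v => Sum.elim (0 : Fin k → ℤ) v
      map_add' := fun a b => by funext p; rcases p with i | c <;> simp
      map_smul' := fun r a => by funext p; rcases p with i | c <;> simp }
  let φ : (Fin (n-1) → ℤ) →+ ((Fin k ⊕ Fin (n-1) → ℤ) ⧸ Rg) :=
    ((Rg.mkQ).comp ι).toAddMonoidHom
  have hφ : ∀ v, φ v = Submodule.Quotient.mk (Sum.elim (0 : Fin k → ℤ) v) := fun v => rfl
  let ψ : (Fin (n-1) → ℤ) →+ (Fin (n-1) → ZMod (n+k)) :=
    { toFun := fun v c => ((v c : ℤ) : ZMod (n+k))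
      map_zero' := by funext c; simp
      map_add' := fun a b => by funext c; simp }
  have hψsurj : Function.Surjective ψ := by
    intro f
    refine ⟨fun c => ((f c).val : ℤ), ?_⟩
    funext c
    simp [ψ, ZMod.natCast_val, ZMod.intCast_cast, ZMod.cast_id]
  have hker : φ.ker = ψ.ker := by
    ext v
    simp only [AddMonoidHom.mem_ker, hφ]
    rw [Submodule.Quotient.mk_eq_zero]
    constructor
    · intro hv
      obtain ⟨xx, hxx⟩ := hv
      funext c
      have : ((v c : ℤ) : ZMod (n+k)) = 0 := by
        rw [ZMod.intCast_zmod_eq_zero_iff_dvd]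
        exact hF3 xx v hxx c
      exact this
    · intro hv
      have hdvd : ∀ c, ((n + k : ℕ) : ℤ) ∣ v c := by
        intro c
        rw [← ZMod.intCast_zmod_eq_zero_iff_dvd]
        exact congrFun hv c
      choose w hw using hdvd
      refine ⟨Sum.elim (0 : Fin k → ℤ) w + (∑ c, w c) • (fun _ => 1), ?_⟩
      rw [Matrix.mulVecLin_apply, hF2 w]
      funext p
      rcases p with i | c
      · rfl
      · simp [hw c]
  -- the S-isomorphism
  let eS : φ.range ≃+ (Fin (n-1) → ZMod (n+k)) :=
    (QuotientAddGroup.quotientKerEquivRange φ).symm.trans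
      ((QuotientAddGroup.quotientAddEquivOfEq hker).trans
        (QuotientAddGroup.quotientKerEquivOfSurjective ψ hψsurj))
  -- the quotient: C / S ≃ ℤ^k / MM
  set NA : Submodule ℤ (Fin k → ℤ) := LinearMap.range ((n : ℤ) • 1 + L).mulVecLin with hNA
  set MM : Submodule ℤ (Fin k → ℤ) := NA ⊔ (ℤ ∙ (fun _ => (1:ℤ))) with hMM
  let π : (Fin k ⊕ Fin (n-1) → ℤ) →ₗ[ℤ] (Fin k → ℤ) := LinearMap.funLeft ℤ ℤ Sum.inl
  have hπ : ∀ (x : Fin k ⊕ Fin (n-1) → ℤ) i, π x i = x (Sum.inl i) := fun x i => rfl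
  have hcond : Rg ≤ LinearMap.ker (MM.mkQ ∘ₗ π) := by
    rintro _ ⟨x, rfl⟩
    simp only [LinearMap.mem_ker, LinearMap.comp_apply, Submodule.mkQ_apply,
      Submodule.Quotient.mk_eq_zero]
    have hcalc : π (Ln.mulVecLin x) = ((n : ℤ) • 1 + L).mulVec (fun i => x (Sum.inl i))
        - (∑ c, x (Sum.inr c)) • (fun _ => (1:ℤ)) := by
      funext i
      rw [hπ, Matrix.mulVecLin_apply, hLn, mulVec_inl L]
      simp only [Pi.sub_apply, Pi.smul_apply, smul_eq_mul, mul_one]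
      rw [A_mulVec]
    rw [hcalc]
    exact sub_mem (Submodule.mem_sup_left (LinearMap.mem_range_self _ _))
      (Submodule.mem_sup_right (Submodule.smul_mem _ _ (Submodule.mem_span_singleton_self _)))
  let ρ : ((Fin k ⊕ Fin (n-1) → ℤ) ⧸ Rg) →ₗ[ℤ] ((Fin k → ℤ) ⧸ MM) := Rg.liftQ (MM.mkQ ∘ₗ π) hcond
  let ρ' := ρ.toAddMonoidHom
  have hρmk : ∀ x, ρ' (Submodule.Quotient.mk x) = Submodule.Quotient.mk (π x) := fun x => rfl
  have hρsurj : Function.Surjective ρ' := by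
    intro q
    obtain ⟨z, rfl⟩ := Submodule.mkQ_surjective MM q
    exact ⟨Submodule.Quotient.mk (Sum.elim z (0 : Fin (n-1) → ℤ)), rfl⟩
  have honesRg : (fun _ => (1:ℤ)) ∈ Rg := ⟨(fun _ => (1:ℤ)), by
    rw [Matrix.mulVecLin_apply, hones]⟩
  have hkerρ : ρ'.ker = φ.range := by
    ext q
    constructor
    · intro hq
      obtain ⟨x, rfl⟩ := Submodule.mkQ_surjective Rg q
      have hmem : π x ∈ MM := by
        rw [AddMonoidHom.mem_ker] at hq
        rw [Submodule.mkQ_apply] at hq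
        rw [hρmk] at hq
        exact (Submodule.Quotient.mk_eq_zero MM).mp hq
      rw [hMM, Submodule.mem_sup] at hmem
      obtain ⟨y, hy, z, hz, hyz⟩ := hmem
      obtain ⟨u', rfl⟩ := hy
      rw [Submodule.mem_span_singleton] at hz
      obtain ⟨t, rfl⟩ := hz
      set y0 : Fin (n-1) → ℤ :=
        fun c => x (Sum.inr c) - (Ln.mulVec (Sum.elim u' (0 : Fin (n-1) → ℤ))) (Sum.inr c) - t
        with hy0
      refine ⟨y0, ?_⟩
      rw [hφ, Submodule.mkQ_apply, Submodule.Quotient.eq]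
      have hxin : Sum.elim (0 : Fin k → ℤ) y0 - x
          = -(Ln.mulVec (Sum.elim u' (0 : Fin (n-1) → ℤ)) + t • (fun _ => (1:ℤ))) := by
        funext p
        rcases p with i | c
        · have hcomp := congrFun hyz i
          simp only [Pi.add_apply, Pi.smul_apply, smul_eq_mul, mul_one] at hcomp
          rw [Matrix.mulVecLin_apply, hπ] at hcomp
          rw [A_mulVec] at hcomp
          simp only [Sum.elim_inl, Pi.sub_apply, Pi.neg_apply, Pi.add_apply, Pi.smul_apply,
            smul_eq_mul, mul_one, Pi.zero_apply]
          rw [hLn, mulVec_inl L]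
          simp only [Sum.elim_inl, Sum.elim_inr, Pi.zero_apply, Finset.sum_const_zero, sub_zero]
          linarith
        · simp only [hy0, Sum.elim_inr, Pi.sub_apply, Pi.neg_apply, Pi.add_apply, Pi.smul_apply,
            smul_eq_mul, mul_one]
          ring
      rw [hxin]
      refine neg_mem (add_mem ⟨Sum.elim u' (0 : Fin (n-1) → ℤ), by rw [Matrix.mulVecLin_apply]⟩ ?_)
      exact Submodule.smul_mem _ _ honesRg
    · rintro ⟨v, rfl⟩
      rw [AddMonoidHom.mem_ker, hφ, hρmk]
      have h0 : π (Sum.elim (0 : Fin k → ℤ) v) = 0 := rfl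
      rw [h0]
      exact (Submodule.Quotient.mk_eq_zero MM).mpr (zero_mem MM)
  let eqC : ((((Fin k ⊕ Fin (n-1)) → ℤ) ⧸ Rg) ⧸ φ.range) ≃+ ((Fin k → ℤ) ⧸ MM) :=
    (QuotientAddGroup.quotientAddEquivOfEq hkerρ.symm).trans
      (QuotientAddGroup.quotientKerEquivOfSurjective ρ' hρsurj)
  -- determinant of A is nonzero
  have hdetA : ((n : ℤ) • 1 + L).det ≠ 0 := by
    intro h0
    obtain ⟨v, hv, hv0⟩ := Matrix.exists_mulVec_eq_zero_iff.mpr h0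
    obtain ⟨hconst, hc⟩ := hAkey v 0 (by funext i; exact congrFun hv0 i)
    apply hv
    funext i
    rw [hconst i]
    have hv00 : v ⟨0, hk⟩ = 0 := by
      rcases mul_eq_zero.mp hc.symm with h | h
      · exact absurd h hn0
      · exact h
    rw [hv00]
    rfl
  have cardNA : Nat.card ((Fin k → ℤ) ⧸ NA) = ((n : ℤ) • 1 + L).det.natAbs :=
    card_coker_eq_natAbs_det _ hdetA
  have hNA0 : Nat.card ((Fin k → ℤ) ⧸ NA) ≠ 0 := by
    rw [cardNA]
    exact Int.natAbs_ne_zero.mpr hdetA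
  haveI finNA : Finite ((Fin k → ℤ) ⧸ NA) := Nat.finite_of_card_ne_zero hNA0
  -- the connecting surjection σ
  have hNAMM : NA ≤ MM := le_sup_left
  let σ : ((Fin k → ℤ) ⧸ NA) →ₗ[ℤ] ((Fin k → ℤ) ⧸ MM) :=
    NA.liftQ MM.mkQ (by rw [Submodule.ker_mkQ]; exact hNAMM)
  let σ' := σ.toAddMonoidHom
  have hσmk : ∀ z, σ' (Submodule.Quotient.mk z) = Submodule.Quotient.mk z := fun z => rfl
  have hσsurj : Function.Surjective σ' := by
    intro q
    obtain ⟨z, rfl⟩ := Submodule.mkQ_surjective MM q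
    exact ⟨Submodule.Quotient.mk z, rfl⟩
  haveI finMM : Finite ((Fin k → ℤ) ⧸ MM) := Finite.of_surjective σ' hσsurj
  -- kernel of σ is generated by the class of the all-ones vector
  set ξ : (Fin k → ℤ) ⧸ NA := Submodule.Quotient.mk (fun _ => (1:ℤ)) with hξ
  have hkσ : σ'.ker = AddSubgroup.zmultiples ξ := by
    ext q
    constructor
    · intro hq
      obtain ⟨z, rfl⟩ := Submodule.mkQ_surjective NA q
      rw [AddMonoidHom.mem_ker, Submodule.mkQ_apply, hσmk,
        Submodule.Quotient.mk_eq_zero] at hq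
      rw [hMM, Submodule.mem_sup] at hq
      obtain ⟨y, hy, z', hz', hyz⟩ := hq
      obtain ⟨u', rfl⟩ := hy
      rw [Submodule.mem_span_singleton] at hz'
      obtain ⟨t, rfl⟩ := hz'
      refine AddSubgroup.mem_zmultiples_iff.mpr ⟨t, ?_⟩
      rw [hξ, ← Submodule.mkQ_apply NA, ← map_zsmul (NA.mkQ), Submodule.mkQ_apply,
        Submodule.mkQ_apply, Submodule.Quotient.eq]
      have : t • (fun _ => (1:ℤ)) - z = -(((n : ℤ) • 1 + L).mulVecLin u') := by
        rw [← hyz]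
        abel
      rw [this]
      exact neg_mem (LinearMap.mem_range_self _ _)
    · intro hq
      obtain ⟨t, rfl⟩ := AddSubgroup.mem_zmultiples_iff.mp hq
      rw [AddMonoidHom.mem_ker, map_zsmul, hξ, hσmk]
      rw [show ((Submodule.Quotient.mk (fun _ => (1:ℤ))) : (Fin k → ℤ) ⧸ MM)
        = 0 from (Submodule.Quotient.mk_eq_zero MM).mpr
          (Submodule.mem_sup_right (Submodule.mem_span_singleton_self _))]
      rw [smul_zero]
  have hordξ : addOrderOf ξ = n := by
    have h1 : addOrderOf ξ ∣ n := by
      apply addOrderOf_dvd_of_nsmul_eq_zero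
      rw [hξ, ← Submodule.mkQ_apply NA, ← map_nsmul (NA.mkQ), Submodule.mkQ_apply,
        Submodule.Quotient.mk_eq_zero]
      refine ⟨(fun _ => (1:ℤ)), ?_⟩
      funext i
      rw [Matrix.mulVecLin_apply, A_mulVec]
      simp [hrow i]
    have h2 : n ∣ addOrderOf ξ := by
      have hd0 : (addOrderOf ξ) • ξ = 0 := addOrderOf_nsmul_eq_zero ξ
      rw [hξ, ← Submodule.mkQ_apply NA, ← map_nsmul (NA.mkQ), Submodule.mkQ_apply,
        Submodule.Quotient.mk_eq_zero] at hd0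
      obtain ⟨u, hu⟩ := hd0
      have hu' : ((n : ℤ) • 1 + L).mulVec u = fun _ => ((addOrderOf ξ : ℕ) : ℤ) := by
        funext i
        rw [← Matrix.mulVecLin_apply, hu]
        simp [hξ]
      obtain ⟨hconst, hc⟩ := hAkey u _ hu'
      have : (n : ℤ) ∣ ((addOrderOf ξ : ℕ) : ℤ) := ⟨u ⟨0, hk⟩, hc⟩
      exact_mod_cast this
    exact Nat.dvd_antisymm h1 h2
  have hkercard : Nat.card σ'.ker = n := by
    rw [hkσ, Nat.card_zmultiples, hordξ]
  have hbig : Nat.card ((Fin k → ℤ) ⧸ NA) = Nat.card ((Fin k → ℤ) ⧸ MM) * n := by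
    have h := AddSubgroup.card_eq_card_quotient_mul_card_addSubgroup (σ'.ker)
    rw [hkercard] at h
    rw [Nat.card_congr (QuotientAddGroup.quotientKerEquivOfSurjective σ' hσsurj).toEquiv] at h
    exact h
  -- assemble
  refine ⟨φ.range, ⟨eS⟩, Finite.of_equiv _ eqC.symm.toEquiv, ?_⟩
  have hcards : Nat.card (((Fin k ⊕ Fin (n-1) → ℤ) ⧸ Rg) ⧸ φ.range)
      = Nat.card ((Fin k → ℤ) ⧸ MM) := Nat.card_congr eqC.toEquiv
  have hnatcard : n * Nat.card (((Fin k ⊕ Fin (n-1) → ℤ) ⧸ Rg) ⧸ φ.range)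
      = ((n : ℤ) • 1 + L).det.natAbs := by
    rw [hcards, ← cardNA, hbig]
    ring
  have hdet2 : ((-(n : ℤ)) • 1 - L).det = (-1)^k * ((n : ℤ) • 1 + L).det := by
    have hmat : ((-(n : ℤ)) • 1 - L) = -((n : ℤ) • 1 + L : Matrix (Fin k) (Fin k) ℤ) := by
      rw [neg_smul]
      abel
    rw [hmat, Matrix.det_neg]
    simp
  rw [hdet2, abs_mul, abs_pow, abs_neg, abs_one, one_pow, one_mul, Int.abs_eq_natAbs]
  exact_mod_cast hnatcard
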